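/- arXiv:2404.03272 — 5 statements merged into one kernel-verified Lean document; each statement's English description precedes it below -/
import Mathlib

section
/- For any γ > 0, the second moment of the discrete Gaussian A_γ on the lattice (1/γ)ℤ with width 1 is strictly less than 1/(2π). Here A_γ assigns to each point x ∈ (1/γ)ℤ probability ρ(x)/ρ((1/γ)ℤ), where ρ(x) = exp(-π x²). -/
open Real

/-- Gaussian mass of the lattice `(1/γ)ℤ`. -/
noncomputable def latticeMass (γ : ℝ) : ℝ :=
  ∑' k : ℤ, Real.exp (-Real.pi * ((k : ℝ) / γ) ^ 2)

open Complex Filter Asymptotics MeasureTheory FourierTransform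


lemma aux_real (c₁ c₂ : ℝ) {a : ℝ} (ha : 0 < a) :
    (fun x : ℝ => (c₁ + c₂ * x ^ 2) * Real.exp (-a * x ^ 2)) =O[cocompact ℝ] (|·| ^ (-2 : ℝ)) := by
  have h1 : (fun x : ℝ => Real.exp (-a * x ^ 2)) =O[cocompact ℝ] (|·| ^ (-2 : ℝ)) := by
    have := (isLittleO_exp_neg_mul_sq_cocompact (a := (a : ℂ)) (by simpa using ha) (-2)).isBigO.norm_left
    refine this.congr_left fun x => ?_
    have : (-(a:ℂ) * (x:ℂ) ^ 2) = ((-a * x ^ 2 : ℝ) : ℂ) := by push_cast; ring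
    rw [this, ← Complex.ofReal_exp, Complex.norm_real, Real.norm_eq_abs,
      _root_.abs_of_nonneg (Real.exp_pos _).le]
  have h2 : (fun x : ℝ => x ^ 2 * Real.exp (-a * x ^ 2)) =O[cocompact ℝ] (|·| ^ (-2 : ℝ)) := by
    rw [isBigO_iff]
    refine ⟨1, ?_⟩
    have hev : ∀ᶠ x : ℝ in cocompact ℝ, |x| ^ (4:ℝ) * Real.exp (-a * x ^ 2) ≤ 1 :=
      (tendsto_rpow_abs_mul_exp_neg_mul_sq_cocompact ha 4).eventually_le_const (by norm_num)
    have hev2 : ∀ᶠ x : ℝ in cocompact ℝ, 1 ≤ |x| := by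
      rw [cocompact_eq_atBot_atTop, eventually_sup]
      constructor
      · filter_upwards [eventually_le_atBot (-1)] with x hx
        exact le_trans (by linarith) (neg_le_abs x)
      · filter_upwards [eventually_ge_atTop 1] with x hx
        exact le_trans hx (le_abs_self x)
    filter_upwards [hev, hev2] with x h4 h1x
    have hx0 : (0:ℝ) < |x| := lt_of_lt_of_le one_pos h1x
    have hpow : |x| ^ (4:ℝ) * |x| ^ (-2:ℝ) = x ^ 2 := by
      rw [← Real.rpow_add hx0]
      norm_num
    have key : |x| ^ (4:ℝ) * Real.exp (-a * x ^ 2) * |x| ^ (-2:ℝ) ≤ 1 * |x| ^ (-2:ℝ) :=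
      mul_le_mul_of_nonneg_right h4 (Real.rpow_nonneg (abs_nonneg x) _)
    calc ‖x ^ 2 * Real.exp (-a * x ^ 2)‖ = x ^ 2 * Real.exp (-a * x ^ 2) := by
          rw [Real.norm_eq_abs, _root_.abs_of_nonneg (by positivity)]
      _ = |x| ^ (4:ℝ) * Real.exp (-a * x ^ 2) * |x| ^ (-2:ℝ) := by rw [mul_right_comm, hpow]
      _ ≤ 1 * |x| ^ (-2:ℝ) := key
      _ = 1 * ‖|x| ^ (-2:ℝ)‖ := by
          rw [Real.norm_eq_abs, _root_.abs_of_nonneg (Real.rpow_nonneg (abs_nonneg x) _)]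
  have := (h1.const_mul_left c₁).add (h2.const_mul_left c₂)
  exact this.congr_left fun x => by ring

lemma aux_cplx (c₁ c₂ : ℂ) {a : ℝ} (ha : 0 < a) :
    (fun x : ℝ => (c₁ + c₂ * (x:ℂ) ^ 2) * Complex.exp (-(a:ℂ) * (x:ℂ) ^ 2)) =O[cocompact ℝ]
      (|·| ^ (-2 : ℝ)) := by
  refine IsBigO.trans (IsBigO.of_bound 1 ?_) (aux_real ‖c₁‖ ‖c₂‖ ha)
  filter_upwards with x
  have hexp : Complex.exp (-(a:ℂ) * (x:ℂ) ^ 2) = ((Real.exp (-a * x ^ 2) : ℝ) : ℂ) := by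
    rw [Complex.ofReal_exp]; congr 1; push_cast; ring
  rw [hexp, norm_mul, Complex.norm_real, Real.norm_eq_abs,
    _root_.abs_of_nonneg (Real.exp_pos _).le, Real.norm_eq_abs, one_mul,
    _root_.abs_of_nonneg (by positivity : (0:ℝ) ≤ (‖c₁‖ + ‖c₂‖ * x ^ 2) * Real.exp (-a * x ^ 2))]
  have : ‖c₁ + c₂ * (x:ℂ) ^ 2‖ ≤ ‖c₁‖ + ‖c₂‖ * x ^ 2 := by
    refine (norm_add_le _ _).trans ?_
    gcongr
    rw [norm_mul]
    simp [sq_abs]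
  exact mul_le_mul_of_nonneg_right this (Real.exp_pos _).le



lemma integrable_poly_cexp (c₁ c₂ c₃ : ℂ) {A : ℂ} (hA : 0 < A.re) :
    Integrable (fun x : ℝ => (c₁ + c₂ * x + c₃ * (x:ℂ) ^ 2) * Complex.exp (-A * (x:ℂ) ^ 2)) := by
  have hcont : Continuous fun x : ℝ => (c₁ + c₂ * x + c₃ * (x:ℂ) ^ 2) *
      Complex.exp (-A * (x:ℂ) ^ 2) := by
    apply Continuous.mul
    · exact (continuous_const.add (continuous_const.mul Complex.continuous_ofReal)).add
        (continuous_const.mul (Complex.continuous_ofReal.pow 2))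
    · exact Complex.continuous_exp.comp (continuous_const.mul (Complex.continuous_ofReal.pow 2))
  refine Integrable.mono'
    (g := fun x => (‖c₁‖ + ‖c₂‖ * |x| + ‖c₃‖ * x ^ 2) * Real.exp (-A.re * x ^ 2)) ?_
    hcont.aestronglyMeasurable ?_
  · have i1 := (integrable_exp_neg_mul_sq hA).const_mul ‖c₁‖
    have i2 := ((integrable_mul_exp_neg_mul_sq hA).abs).const_mul ‖c₂‖
    have i3 := (integrable_rpow_mul_exp_neg_mul_sq hA (by norm_num : (-1:ℝ) < 2)).const_mul ‖c₃‖
    refine (((i1.add i2).add i3).congr ?_)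
    filter_upwards with x
    have h2 : |x * Real.exp (-A.re * x ^ 2)| = |x| * Real.exp (-A.re * x ^ 2) := by
      rw [abs_mul, _root_.abs_of_nonneg (Real.exp_pos _).le]
    have h3 : x ^ (2:ℝ) = x ^ 2 := by
      rw [show (2:ℝ) = ((2:ℕ):ℝ) by norm_num, Real.rpow_natCast]
    simp only [Pi.add_apply]
    rw [h2, h3]; ring
  · filter_upwards with x
    rw [norm_mul, norm_cexp_neg_mul_sq]
    refine mul_le_mul_of_nonneg_right ?_ (Real.exp_pos _).le
    refine (norm_add_le _ _).trans ?_
    gcongr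
    · refine (norm_add_le _ _).trans ?_
      gcongr
      rw [norm_mul, Complex.norm_real, Real.norm_eq_abs]
    · rw [norm_mul, norm_pow, Complex.norm_real, Real.norm_eq_abs, _root_.sq_abs]

lemma fourier_const_mul (c : ℂ) (h : ℝ → ℂ) :
    (𝓕 fun x : ℝ => c * h x) = fun t => c * 𝓕 h t := by
  ext t
  simp_rw [Real.fourier_real_eq_integral_exp_smul, smul_eq_mul]
  rw [← MeasureTheory.integral_const_mul]
  congr 1; ext x; ring


lemma summable_aux (c₁ c₂ : ℝ) {a : ℝ} (ha : 0 < a) :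
    Summable (fun n : ℤ => (c₁ + c₂ * (n:ℝ) ^ 2) * Real.exp (-a * (n:ℝ) ^ 2)) :=
  summable_of_isBigO (Real.summable_abs_int_rpow one_lt_two)
    ((aux_real c₁ c₂ ha).comp_tendsto Int.tendsto_coe_cofinite)

lemma complex_poisson (b : ℝ) (hb : 0 < b) :
    ∑' n : ℤ, ((1/(2*(π:ℂ)*b) : ℂ) - (n:ℂ)^2) * Complex.exp (-((π:ℂ)*b) * (n:ℂ)^2)
      = ∑' n : ℤ, ((n:ℂ)^2/(b:ℂ)^2) * (1/(b:ℂ)^(1/2:ℂ) * Complex.exp (-(π:ℂ)/b * (n:ℂ)^2)) := by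
  set A : ℂ := (π:ℂ) * b with hAdef
  have hA : 0 < A.re := by
    simp only [hAdef, ← Complex.ofReal_mul, Complex.ofReal_re]
    positivity
  have hA0 : A ≠ 0 := by
    intro h; rw [h] at hA; simp at hA
  set g : ℝ → ℂ := fun x => Complex.exp (-A * (x:ℂ)^2) with hgdef
  have hgd : ∀ x : ℝ, HasDerivAt g (-A * (2*(x:ℂ)) * g x) x := by
    intro x
    have h1 : HasDerivAt (fun x : ℝ => ((x:ℂ)^2)) (2*(x:ℂ)) x := by
      have := (hasDerivAt_pow 2 x).ofReal_comp
      simpa [Complex.ofReal_pow] using this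
    have h2 := (h1.const_mul (-A)).cexp
    convert h2 using 1
    ring
  set g1 : ℝ → ℂ := fun x => -A * (2*(x:ℂ)) * g x with hg1def
  have hdg : deriv g = g1 := funext fun x => (hgd x).deriv
  have hg1d : ∀ x : ℝ, HasDerivAt g1 ((-2*A + 4*A^2*(x:ℂ)^2) * g x) x := by
    intro x
    have hc : HasDerivAt (fun x : ℝ => -A * (2*(x:ℂ))) (-A * 2) x := by
      have := ((hasDerivAt_id x).ofReal_comp).const_mul (-A * 2)
      simpa [mul_assoc] using this
    have := hc.mul (hgd x)
    exact this.congr_deriv (by ring)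
  set g2 : ℝ → ℂ := fun x => (-2*A + 4*A^2*(x:ℂ)^2) * g x with hg2def
  have hdg1 : deriv g1 = g2 := funext fun x => (hg1d x).deriv
  -- integrability
  have ig : Integrable g := by
    have := integrable_poly_cexp 1 0 0 hA
    refine this.congr (Filter.Eventually.of_forall fun x => ?_)
    simp [hgdef]
  have ig1 : Integrable g1 := by
    have := integrable_poly_cexp 0 (-2*A) 0 hA
    refine this.congr (Filter.Eventually.of_forall fun x => ?_)
    simp only [hg1def, hgdef]
    ring
  have ig2 : Integrable g2 := by
    have := integrable_poly_cexp (-2*A) 0 (4*A^2) hA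
    refine this.congr (Filter.Eventually.of_forall fun x => ?_)
    simp only [hg2def, hgdef]
    ring
  -- Fourier transform of g
  have hFg : 𝓕 g = fun t : ℝ => 1/(b:ℂ)^(1/2:ℂ) * Complex.exp (-(π:ℂ)/b * (t:ℂ)^2) := by
    have h := fourier_gaussian_pi (b := (b:ℂ)) (by simpa using hb)
    have hgfun : g = fun x : ℝ => cexp (-(π:ℂ) * (b:ℂ) * (x:ℂ)^2) := by
      funext x
      simp only [hgdef, hAdef]
      congr 1
      ring
    rw [hgfun]
    exact h
  -- Fourier of derivatives
  have hF1 : 𝓕 g1 = fun t : ℝ => (2*π*I*t) • 𝓕 g t := by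
    rw [← hdg]
    exact Real.fourier_deriv ig (fun x => (hgd x).differentiableAt) (by rw [hdg]; exact ig1)
  have hF2 : 𝓕 g2 = fun t : ℝ => (2*π*I*t) • 𝓕 g1 t := by
    rw [← hdg1]
    exact Real.fourier_deriv ig1 (fun x => (hg1d x).differentiableAt)
      (by rw [hdg1]; exact ig2)
  -- the function f
  set f : ℝ → ℂ := fun x => ((1/(2*A) : ℂ) - (x:ℂ)^2) * g x with hfdef
  have hf_eq : f = fun x => (-(1/(4*A^2))) * g2 x := by
    ext x
    simp only [hfdef, hg2def]
    field_simp
    ring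
  have hFf : 𝓕 f = fun t : ℝ => ((t:ℂ)^2/(b:ℂ)^2) * 𝓕 g t := by
    rw [hf_eq, fourier_const_mul]
    ext t
    rw [hF2, hF1]
    simp only [smul_eq_mul]
    have hI : (I:ℂ)^2 = -1 := Complex.I_sq
    have hb0 : (b:ℂ) ≠ 0 := by exact_mod_cast hb.ne'
    have hbC : ((b:ℂ))^2 ≠ 0 := pow_ne_zero _ hb0
    field_simp [hAdef]
    ring_nf
    rw [hI]
    ring_nf
    rw [hAdef]; ring
  -- big-O hypotheses
  have hπb : 0 < π * b := mul_pos pi_pos hb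
  have hπb' : 0 < π / b := div_pos pi_pos hb
  have hargA : ((π * b : ℝ) : ℂ) = A := by rw [hAdef]; push_cast; ring
  have hOf : f =O[cocompact ℝ] (fun x : ℝ => |x| ^ (-2 : ℝ)) := by
    have h := aux_cplx (1/(2*A)) (-1) hπb
    refine h.congr_left fun x => ?_
    simp only [hfdef, hgdef]
    rw [hargA]
    ring
  have hOFf : (𝓕 f) =O[cocompact ℝ] (fun x : ℝ => |x| ^ (-2 : ℝ)) := by
    rw [hFf, hFg]
    have h := aux_cplx 0 ((1/(b:ℂ)^2) * (1/(b:ℂ)^(1/2:ℂ))) hπb'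
    refine h.congr_left fun t => ?_
    have harg : ((π / b : ℝ) : ℂ) = (π:ℂ)/b := by push_cast; ring
    rw [harg]
    ring
  have hcont_f : Continuous f := by
    refine Continuous.mul ?_ ?_
    · exact continuous_const.sub (Complex.continuous_ofReal.pow 2)
    · exact Complex.continuous_exp.comp ((continuous_const.mul (Complex.continuous_ofReal.pow 2)))
  have P := Real.tsum_eq_tsum_fourier_of_rpow_decay hcont_f one_lt_two hOf hOFf 0
  simp only [zero_add, QuotientAddGroup.mk_zero, fourier_eval_zero, mul_one] at P
  calc ∑' n : ℤ, ((1/(2*(π:ℂ)*b) : ℂ) - (n:ℂ)^2) * Complex.exp (-((π:ℂ)*b) * (n:ℂ)^2)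
      = ∑' n : ℤ, f n := by
        refine tsum_congr fun n => ?_
        simp only [hfdef, hgdef, hAdef]
        push_cast
        ring_nf
    _ = ∑' n : ℤ, 𝓕 f n := P
    _ = ∑' n : ℤ, ((n:ℂ)^2/(b:ℂ)^2) * (1/(b:ℂ)^(1/2:ℂ) * Complex.exp (-(π:ℂ)/b * (n:ℂ)^2)) := by
        refine tsum_congr fun n => ?_
        rw [hFf, hFg]
        push_cast
        ring

lemma real_key (b : ℝ) (hb : 0 < b) :
    ∑' n : ℤ, (n:ℝ)^2 * Real.exp (-(π*b) * (n:ℝ)^2)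
      < (1/(2*π*b)) * ∑' n : ℤ, Real.exp (-(π*b) * (n:ℝ)^2) := by
  have hπb : 0 < π * b := mul_pos pi_pos hb
  have hπb' : 0 < π / b := div_pos pi_pos hb
  have C := complex_poisson b hb
  have hL : ∀ n : ℤ, ((1/(2*(π:ℂ)*b) : ℂ) - (n:ℂ)^2) * Complex.exp (-((π:ℂ)*b) * (n:ℂ)^2)
      = (((1/(2*π*b) - (n:ℝ)^2) * Real.exp (-(π*b) * (n:ℝ)^2) : ℝ) : ℂ) := by
    intro n
    push_cast [Complex.ofReal_exp]
    ring_nf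
  have hR : ∀ n : ℤ, ((n:ℂ)^2/(b:ℂ)^2) * (1/(b:ℂ)^(1/2:ℂ) * Complex.exp (-(π:ℂ)/b * (n:ℂ)^2))
      = ((((n:ℝ)^2/b^2) * (1/b^(1/2:ℝ) * Real.exp (-(π/b) * (n:ℝ)^2)) : ℝ) : ℂ) := by
    intro n
    have hcp : ((b ^ (1/2:ℝ) : ℝ) : ℂ) = (b:ℂ) ^ (1/2:ℂ) := by
      rw [Complex.ofReal_cpow hb.le]
      norm_num
    push_cast [Complex.ofReal_exp, hcp]
    ring_nf
  rw [tsum_congr hL, tsum_congr hR, ← Complex.ofReal_tsum, ← Complex.ofReal_tsum,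
    Complex.ofReal_inj] at C
  have hs1 : Summable (fun n : ℤ => Real.exp (-(π*b) * (n:ℝ)^2)) := by
    have := summable_aux 1 0 hπb
    refine this.congr fun n => by ring
  have hs2 : Summable (fun n : ℤ => (n:ℝ)^2 * Real.exp (-(π*b) * (n:ℝ)^2)) := by
    have := summable_aux 0 1 hπb
    refine this.congr fun n => by ring
  have hsR : Summable (fun n : ℤ => ((n:ℝ)^2/b^2) * (1/b^(1/2:ℝ) * Real.exp (-(π/b) * (n:ℝ)^2))) := by
    have := summable_aux 0 (1/b^2 * (1/b^(1/2:ℝ))) hπb'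
    refine this.congr fun n => by ring
  have hRpos : 0 < ∑' n : ℤ, ((n:ℝ)^2/b^2) * (1/b^(1/2:ℝ) * Real.exp (-(π/b) * (n:ℝ)^2)) := by
    refine Summable.tsum_pos hsR (fun n => by positivity) 1 ?_
    push_cast
    norm_num
    positivity
  have hsplit : ∑' n : ℤ, (1/(2*π*b) - (n:ℝ)^2) * Real.exp (-(π*b) * (n:ℝ)^2)
      = (1/(2*π*b)) * (∑' n : ℤ, Real.exp (-(π*b) * (n:ℝ)^2))
        - ∑' n : ℤ, (n:ℝ)^2 * Real.exp (-(π*b) * (n:ℝ)^2) := by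
    rw [← tsum_mul_left]
    rw [← Summable.tsum_sub (hs1.mul_left _) hs2]
    exact tsum_congr fun n => by ring
  rw [hsplit] at C
  linarith [C ▸ hRpos]



/-- The second moment of the discrete Gaussian `A_γ` on `(1/γ)ℤ` (mass at `k/γ`
proportional to `exp (-π (k/γ)²)`) is strictly less than `1/(2π)`. -/
theorem discreteGaussian_secondMoment_lt (γ : ℝ) (hγ : 0 < γ) :
    (1 / latticeMass γ) *
      ∑' k : ℤ, ((k : ℝ) / γ) ^ 2 * Real.exp (-Real.pi * ((k : ℝ) / γ) ^ 2)
    < 1 / (2 * Real.pi) := by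
  set b : ℝ := 1 / γ^2 with hbdef
  have hb : 0 < b := by positivity
  have e_eq : ∀ k : ℤ, -(π*b) * (k:ℝ)^2 = -Real.pi * ((k:ℝ)/γ) ^ 2 := by
    intro k
    field_simp [hbdef]
    rw [hbdef]; field_simp [hγ.ne']
  have hM : latticeMass γ = ∑' n : ℤ, Real.exp (-(π*b) * (n:ℝ)^2) := by
    unfold latticeMass
    exact tsum_congr fun k => by rw [e_eq]
  have hS : ∑' k : ℤ, ((k:ℝ)/γ)^2 * Real.exp (-Real.pi * ((k:ℝ)/γ)^2)
      = (1/γ^2) * ∑' n : ℤ, (n:ℝ)^2 * Real.exp (-(π*b) * (n:ℝ)^2) := by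
    rw [← tsum_mul_left]
    refine tsum_congr fun k => ?_
    rw [e_eq, div_pow]
    ring
  have hπb : 0 < π * b := mul_pos pi_pos hb
  have hs1 : Summable (fun n : ℤ => Real.exp (-(π*b) * (n:ℝ)^2)) := by
    have := summable_aux 1 0 hπb
    refine this.congr fun n => by ring
  have hMpos : 0 < latticeMass γ := by
    rw [hM]
    refine Summable.tsum_pos hs1 (fun n => (Real.exp_pos _).le) 0 (Real.exp_pos _)
  have K := real_key b hb
  have hc : (1/γ^2) * (1/(2*π*b)) = 1/(2*π) := by
    field_simp [hbdef]
    rw [hbdef]; field_simp [hγ.ne']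
  rw [hM] at hMpos
  rw [hS, hM, one_div, inv_mul_eq_div, div_lt_iff₀ hMpos]
  have hγ2 : (0:ℝ) < 1/γ^2 := by positivity
  calc (1/γ^2) * ∑' n : ℤ, (n:ℝ)^2 * Real.exp (-(π*b) * (n:ℝ)^2)
      < (1/γ^2) * ((1/(2*π*b)) * ∑' n : ℤ, Real.exp (-(π*b) * (n:ℝ)^2)) :=
        mul_lt_mul_of_pos_left K hγ2
    _ = 1/(2*π) * ∑' n : ℤ, Real.exp (-(π*b) * (n:ℝ)^2) := by rw [← mul_assoc, hc]
end

section
/- For any γ > 0 and σ > 0, the KL divergence between the σ-smoothed discrete Gaussian A_γ^σ and Q = N(0, 1/(2π)) satisfies KL(A_γ^σ ‖ Q) ≤ log(√(1+σ²)/σ) ≤ 1/(2σ²). -/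
open Real MeasureTheory

lemma summable_gauss {c : ℝ} (hc : 0 < c) (z : ℝ) :
    Summable fun k : ℤ => Real.exp (-π * c * (z - k) ^ 2) := by
  apply (summable_pow_mul_jacobiTheta₂_term_bound (c * |z|) hc 0).of_nonneg_of_le
    (fun k => (Real.exp_pos _).le)
  intro k
  simp only [pow_zero, one_mul]
  apply Real.exp_le_exp.2
  have h1 : (z : ℝ) * k ≤ |z| * |(k:ℝ)| := le_trans (le_abs_self _) (abs_mul z k).le
  rw [Int.cast_abs]
  have h3 : 0 ≤ z ^ 2 + 2 * (|z| * |(k:ℝ)| - z * k) := by nlinarith [sq_nonneg z]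
  nlinarith [mul_pos pi_pos hc]

lemma tsum_gauss_mono {c c' : ℝ} (hc : 0 < c) (hcc : c ≤ c') :
    (∑' k : ℤ, Real.exp (-π * c' * (k:ℝ) ^ 2)) ≤ ∑' k : ℤ, Real.exp (-π * c * (k:ℝ) ^ 2) := by
  refine Summable.tsum_le_tsum (fun k => Real.exp_le_exp.2 ?_) ?_ ?_
  · have h := mul_le_mul_of_nonneg_right hcc (sq_nonneg (k:ℝ))
    nlinarith [pi_pos]
  · simpa [zero_sub, neg_sq] using summable_gauss (lt_of_lt_of_le hc hcc) 0
  · simpa [zero_sub, neg_sq] using summable_gauss hc 0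

lemma theta_le {c : ℝ} (hc : 0 < c) (z : ℝ) :
    (∑' k : ℤ, Real.exp (-π * c * (z - k) ^ 2)) ≤ ∑' k : ℤ, Real.exp (-π * c * (k : ℝ) ^ 2) := by
  have hc0 : (c : ℂ) ≠ 0 := Complex.ofReal_ne_zero.2 hc.ne'
  set X : ℝ := ∑' k : ℤ, Real.exp (-π * c * (k : ℝ) ^ 2 + 2 * π * (c * z) * k) with hX
  have hterm : ∀ k : ℤ, Real.exp (-π * c * (z - k) ^ 2)
      = Real.exp (-π * c * z ^ 2) * Real.exp (-π * c * (k : ℝ) ^ 2 + 2 * π * (c * z) * k) := by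
    intro k; rw [← Real.exp_add]; congr 1; ring
  have h1 : (∑' k : ℤ, Real.exp (-π * c * (z - k) ^ 2)) = Real.exp (-π * c * z ^ 2) * X := by
    simp_rw [hterm]; exact tsum_mul_left
  have key := Complex.tsum_exp_neg_quadratic (a := (c : ℂ))
    (by simpa using hc) ((c * z : ℝ) : ℂ)
  have hcast : ((X : ℝ) : ℂ)
      = ∑' n : ℤ, Complex.exp (-↑π * (c:ℂ) * (n:ℂ) ^ 2 + 2 * ↑π * ((c*z:ℝ):ℂ) * (n:ℂ)) := by
    rw [hX, Complex.ofReal_tsum]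
    congr 1; funext n
    rw [Complex.ofReal_exp]
    congr 1; push_cast; ring
  have hcast2 : ((X : ℝ) : ℂ)
      = 1 / (c:ℂ) ^ (1/2 : ℂ) *
        ∑' n : ℤ, Complex.exp (-↑π / (c:ℂ) * ((n:ℂ) + Complex.I * ((c*z:ℝ):ℂ)) ^ 2) := by
    rw [hcast]; exact key
  have hnorm : ∀ n : ℤ, ‖Complex.exp (-↑π / (c:ℂ) * ((n:ℂ) + Complex.I * ((c*z:ℝ):ℂ)) ^ 2)‖
      = Real.exp (π * c * z ^ 2) * Real.exp (-π / c * (n:ℝ) ^ 2) := by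
    intro n
    rw [← Real.exp_add, Complex.norm_exp]
    congr 1
    have hid : -↑π / (c:ℂ) * ((n:ℂ) + Complex.I * ((c*z:ℝ):ℂ)) ^ 2
        = ((π * c * z ^ 2 + -π / c * (n:ℝ) ^ 2 : ℝ) : ℂ)
          + Complex.I * ((-2 * π * n * z : ℝ) : ℂ) := by
      push_cast
      field_simp
      ring_nf
      rw [Complex.I_sq]
      ring
    rw [hid]
    simp [← Complex.ofReal_pow]
  have hsum2 : Summable fun n : ℤ => Real.exp (-π / c * (n:ℝ) ^ 2) := by
    have := summable_gauss (c := 1/c) (by positivity) 0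
    apply this.congr
    intro k; congr 1
    rw [zero_sub, neg_sq]
    field_simp
  have hnsum : Summable fun n : ℤ =>
      ‖Complex.exp (-↑π / (c:ℂ) * ((n:ℂ) + Complex.I * ((c*z:ℝ):ℂ)) ^ 2)‖ := by
    simp_rw [hnorm]; exact hsum2.mul_left _
  have hXnonneg : 0 ≤ X := tsum_nonneg fun k => (Real.exp_pos _).le
  have hXle : X ≤ (1 / c ^ (1/2 : ℝ)) *
      (Real.exp (π * c * z ^ 2) * ∑' n : ℤ, Real.exp (-π / c * (n:ℝ) ^ 2)) := by
    have hXn : X = ‖((X : ℝ) : ℂ)‖ := by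
      rw [Complex.norm_real, Real.norm_of_nonneg hXnonneg]
    rw [hXn, hcast2, norm_mul]
    have habs : ‖1 / (c:ℂ) ^ (1/2 : ℂ)‖ = 1 / c ^ (1/2 : ℝ) := by
      rw [norm_div, norm_one, Complex.norm_cpow_eq_rpow_re_of_pos hc]
      norm_num
    rw [habs]
    refine mul_le_mul_of_nonneg_left ?_ (by positivity)
    calc ‖∑' n : ℤ, Complex.exp (-↑π / (c:ℂ) * ((n:ℂ) + Complex.I * ((c*z:ℝ):ℂ)) ^ 2)‖
        ≤ ∑' n : ℤ, ‖Complex.exp (-↑π / (c:ℂ) * ((n:ℂ) + Complex.I * ((c*z:ℝ):ℂ)) ^ 2)‖ :=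
          norm_tsum_le_tsum_norm hnsum
      _ = Real.exp (π * c * z ^ 2) * ∑' n : ℤ, Real.exp (-π / c * (n:ℝ) ^ 2) := by
          simp_rw [hnorm]; exact tsum_mul_left
  have hfin := Real.tsum_exp_neg_mul_int_sq hc
  rw [h1, hfin]
  have hee : Real.exp (-π * c * z ^ 2) * Real.exp (π * c * z ^ 2) = 1 := by
    rw [← Real.exp_add, show -π * c * z ^ 2 + π * c * z ^ 2 = 0 by ring, Real.exp_zero]
  calc Real.exp (-π * c * z ^ 2) * X
      ≤ Real.exp (-π * c * z ^ 2) * ((1 / c ^ (1/2 : ℝ)) *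
          (Real.exp (π * c * z ^ 2) * ∑' n : ℤ, Real.exp (-π / c * (n:ℝ) ^ 2))) :=
        mul_le_mul_of_nonneg_left hXle (Real.exp_pos _).le
    _ = 1 / c ^ (1/2 : ℝ) * ∑' n : ℤ, Real.exp (-π / c * (n:ℝ) ^ 2) := by
        rw [show Real.exp (-π * c * z ^ 2) * ((1 / c ^ (1/2 : ℝ)) *
          (Real.exp (π * c * z ^ 2) * ∑' n : ℤ, Real.exp (-π / c * (n:ℝ) ^ 2)))
          = (Real.exp (-π * c * z ^ 2) * Real.exp (π * c * z ^ 2)) *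
            (1 / c ^ (1/2 : ℝ) * ∑' n : ℤ, Real.exp (-π / c * (n:ℝ) ^ 2)) by ring, hee, one_mul]

noncomputable def pancakeLR (γ σ z : ℝ) : ℝ :=
  (Real.sqrt (1 + σ ^ 2) / (σ * latticeMass γ)) *
    ∑' k : ℤ, Real.exp (-Real.pi * (z - Real.sqrt (1 + σ ^ 2) * (k : ℝ) / γ) ^ 2 / σ ^ 2)
lemma pancake_term_eq {γ σ : ℝ} (hγ : 0 < γ) (hσ : 0 < σ) (z : ℝ) (k : ℤ) :
    Real.exp (-π * (z - Real.sqrt (1 + σ ^ 2) * (k : ℝ) / γ) ^ 2 / σ ^ 2)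
      = Real.exp (-π * ((1 + σ ^ 2) / (γ ^ 2 * σ ^ 2)) *
          (z * γ / Real.sqrt (1 + σ ^ 2) - k) ^ 2) := by
  have hs : Real.sqrt (1 + σ ^ 2) ^ 2 = 1 + σ ^ 2 := Real.sq_sqrt (by positivity)
  have hs0 : Real.sqrt (1 + σ ^ 2) ≠ 0 := by positivity
  congr 1
  set s := Real.sqrt (1 + σ ^ 2) with hsdef
  rw [← hs]
  field_simp

lemma summable_pancake {γ σ : ℝ} (hγ : 0 < γ) (hσ : 0 < σ) (z : ℝ) :
    Summable fun k : ℤ =>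
      Real.exp (-π * (z - Real.sqrt (1 + σ ^ 2) * (k : ℝ) / γ) ^ 2 / σ ^ 2) := by
  have hc : 0 < (1 + σ ^ 2) / (γ ^ 2 * σ ^ 2) := by positivity
  exact (summable_gauss hc (z * γ / Real.sqrt (1 + σ ^ 2))).congr
    fun k => (pancake_term_eq hγ hσ z k).symm

lemma latticeMass_eq {γ : ℝ} (hγ : 0 < γ) :
    latticeMass γ = ∑' k : ℤ, Real.exp (-π * (1 / γ ^ 2) * (k : ℝ) ^ 2) := by
  unfold latticeMass
  congr 1; funext k; congr 1
  field_simp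

lemma summable_latticeMass {γ : ℝ} (hγ : 0 < γ) :
    Summable fun k : ℤ => Real.exp (-Real.pi * ((k : ℝ) / γ) ^ 2) := by
  apply (summable_gauss (c := 1 / γ ^ 2) (by positivity) 0).congr
  intro k; congr 1
  rw [zero_sub, neg_sq]
  field_simp

lemma one_le_latticeMass {γ : ℝ} (hγ : 0 < γ) : 1 ≤ latticeMass γ := by
  have h := Summable.le_tsum (summable_latticeMass hγ) 0 (fun k _ => (Real.exp_pos _).le)
  simpa [latticeMass, neg_mul] using h

lemma latticeMass_pos {γ : ℝ} (hγ : 0 < γ) : 0 < latticeMass γ :=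
  lt_of_lt_of_le one_pos (one_le_latticeMass hγ)

lemma pancakeLR_le {γ σ : ℝ} (hγ : 0 < γ) (hσ : 0 < σ) (z : ℝ) :
    pancakeLR γ σ z ≤ Real.sqrt (1 + σ ^ 2) / σ := by
  have hc : 0 < (1 + σ ^ 2) / (γ ^ 2 * σ ^ 2) := by positivity
  have hM := latticeMass_pos hγ
  have hsum : (∑' k : ℤ, Real.exp (-π * (z - Real.sqrt (1 + σ ^ 2) * (k : ℝ) / γ) ^ 2 / σ ^ 2))
      ≤ latticeMass γ := by
    calc (∑' k : ℤ, Real.exp (-π * (z - Real.sqrt (1 + σ ^ 2) * (k : ℝ) / γ) ^ 2 / σ ^ 2))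
        = ∑' k : ℤ, Real.exp (-π * ((1 + σ ^ 2) / (γ ^ 2 * σ ^ 2)) *
            (z * γ / Real.sqrt (1 + σ ^ 2) - k) ^ 2) :=
          tsum_congr fun k => pancake_term_eq hγ hσ z k
      _ ≤ ∑' k : ℤ, Real.exp (-π * ((1 + σ ^ 2) / (γ ^ 2 * σ ^ 2)) * (k : ℝ) ^ 2) :=
          theta_le hc _
      _ ≤ ∑' k : ℤ, Real.exp (-π * (1 / γ ^ 2) * (k : ℝ) ^ 2) := by
          apply tsum_gauss_mono (by positivity)
          rw [div_le_div_iff₀ (by positivity) (by positivity)]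
          nlinarith [sq_nonneg σ, sq_nonneg γ, sq_nonneg (σ*γ)]
      _ = latticeMass γ := (latticeMass_eq hγ).symm
  unfold pancakeLR
  rw [div_mul_eq_mul_div, div_le_div_iff₀ (by positivity) hσ]
  have h0 : 0 ≤ Real.sqrt (1 + σ ^ 2) := Real.sqrt_nonneg _
  calc Real.sqrt (1 + σ ^ 2) *
        (∑' k : ℤ, Real.exp (-π * (z - Real.sqrt (1 + σ ^ 2) * (k : ℝ) / γ) ^ 2 / σ ^ 2)) * σ
      ≤ Real.sqrt (1 + σ ^ 2) * latticeMass γ * σ := by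
        have := mul_le_mul_of_nonneg_left hsum h0
        exact mul_le_mul_of_nonneg_right this hσ.le
    _ = Real.sqrt (1 + σ ^ 2) * (σ * latticeMass γ) := by ring

lemma pancakeLR_pos {γ σ : ℝ} (hγ : 0 < γ) (hσ : 0 < σ) (z : ℝ) :
    0 < pancakeLR γ σ z := by
  have hM := latticeMass_pos hγ
  apply mul_pos (by positivity)
  exact Summable.tsum_pos (summable_pancake hγ hσ z) (fun k => (Real.exp_pos _).le) 0 (Real.exp_pos _)

lemma combine_exp {γ σ : ℝ} (hγ : 0 < γ) (hσ : 0 < σ) (z : ℝ) (k : ℤ) :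
    Real.exp (-π * z ^ 2) *
      Real.exp (-π * (z - Real.sqrt (1 + σ ^ 2) * (k : ℝ) / γ) ^ 2 / σ ^ 2)
    = Real.exp (-π * ((k : ℝ) / γ) ^ 2) *
      Real.exp (-(π * ((1 + σ ^ 2) / σ ^ 2)) *
        (z - Real.sqrt (1 + σ ^ 2) * (k : ℝ) / (γ * (1 + σ ^ 2))) ^ 2) := by
  have hs : Real.sqrt (1 + σ ^ 2) ^ 2 = 1 + σ ^ 2 := Real.sq_sqrt (by positivity)
  have hs0 : Real.sqrt (1 + σ ^ 2) ≠ 0 := by positivity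
  rw [← Real.exp_add, ← Real.exp_add]
  congr 1
  set s := Real.sqrt (1 + σ ^ 2) with hsdef
  rw [← hs]
  field_simp
  linear_combination (z^2*γ^2 - (k:ℝ)^2) * hs

lemma measurable_pancakeLR {γ σ : ℝ} (hγ : 0 < γ) (hσ : 0 < σ) :
    Measurable fun z : ℝ => pancakeLR γ σ z := by
  apply Measurable.const_mul
  have heq : ∀ z : ℝ, (∑' k : ℤ,
      Real.exp (-π * (z - Real.sqrt (1 + σ ^ 2) * (k : ℝ) / γ) ^ 2 / σ ^ 2))
      = (∑' k : ℤ, ENNReal.ofReal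
          (Real.exp (-π * (z - Real.sqrt (1 + σ ^ 2) * (k : ℝ) / γ) ^ 2 / σ ^ 2))).toReal := by
    intro z
    rw [← ENNReal.ofReal_tsum_of_nonneg (fun k => (Real.exp_pos _).le)
      (summable_pancake hγ hσ z),
      ENNReal.toReal_ofReal (tsum_nonneg fun k => (Real.exp_pos _).le)]
  simp_rw [heq]
  apply ENNReal.measurable_toReal.comp
  apply Measurable.ennreal_tsum
  intro k
  apply Measurable.ennreal_ofReal
  fun_prop

lemma integral_rho_pancake {γ σ : ℝ} (hγ : 0 < γ) (hσ : 0 < σ) :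
    ∫ z : ℝ, Real.exp (-π * z ^ 2) * pancakeLR γ σ z = 1 := by
  have hs : Real.sqrt (1 + σ ^ 2) ^ 2 = 1 + σ ^ 2 := Real.sq_sqrt (by positivity)
  have hs0 : 0 < Real.sqrt (1 + σ ^ 2) := Real.sqrt_pos.2 (by positivity)
  have hM := latticeMass_pos hγ
  have hq0 : 0 < (1 + σ ^ 2) / σ ^ 2 := by positivity
  set F : ℤ → ℝ → ℝ := fun k z => Real.exp (-π * ((k : ℝ) / γ) ^ 2) *
      Real.exp (-(π * ((1 + σ ^ 2) / σ ^ 2)) *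
        (z - Real.sqrt (1 + σ ^ 2) * (k : ℝ) / (γ * (1 + σ ^ 2))) ^ 2) with hF
  have hptwise : ∀ z : ℝ, Real.exp (-π * z ^ 2) * pancakeLR γ σ z
      = (Real.sqrt (1 + σ ^ 2) / (σ * latticeMass γ)) * ∑' k : ℤ, F k z := by
    intro z
    unfold pancakeLR
    rw [show Real.exp (-π * z ^ 2) * ((Real.sqrt (1 + σ ^ 2) / (σ * latticeMass γ)) *
        ∑' k : ℤ, Real.exp (-π * (z - Real.sqrt (1 + σ ^ 2) * (k : ℝ) / γ) ^ 2 / σ ^ 2))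
      = (Real.sqrt (1 + σ ^ 2) / (σ * latticeMass γ)) *
        (Real.exp (-π * z ^ 2) *
          ∑' k : ℤ, Real.exp (-π * (z - Real.sqrt (1 + σ ^ 2) * (k : ℝ) / γ) ^ 2 / σ ^ 2))
      by ring, ← tsum_mul_left]
    congr 1
    exact tsum_congr fun k => combine_exp hγ hσ z k
  simp_rw [hptwise]
  rw [MeasureTheory.integral_const_mul]
  have hint : ∀ k : ℤ, Integrable (F k) :=
    fun k => ((integrable_exp_neg_mul_sq (mul_pos pi_pos hq0)).comp_sub_right
      (Real.sqrt (1 + σ ^ 2) * (k : ℝ) / (γ * (1 + σ ^ 2)))).const_mul _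
  have hval : ∀ k : ℤ, (∫ z : ℝ, F k z)
      = Real.exp (-π * ((k : ℝ) / γ) ^ 2) * (σ / Real.sqrt (1 + σ ^ 2)) := by
    intro k
    rw [hF]
    simp only
    rw [MeasureTheory.integral_const_mul]
    congr 1
    have htr : (∫ z : ℝ, Real.exp (-(π * ((1 + σ ^ 2) / σ ^ 2)) *
        (z - Real.sqrt (1 + σ ^ 2) * (k : ℝ) / (γ * (1 + σ ^ 2))) ^ 2))
        = ∫ z : ℝ, Real.exp (-(π * ((1 + σ ^ 2) / σ ^ 2)) * z ^ 2) :=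
      integral_sub_right_eq_self (fun x => Real.exp (-(π * ((1 + σ ^ 2) / σ ^ 2)) * x ^ 2)) _
    rw [htr, integral_gaussian]
    rw [show π / (π * ((1 + σ ^ 2) / σ ^ 2)) = (σ / Real.sqrt (1 + σ ^ 2)) ^ 2 by
      rw [div_pow, hs]; field_simp]
    exact Real.sqrt_sq (by positivity)
  have hnorm : ∀ k : ℤ, (∫ z : ℝ, ‖F k z‖)
      = Real.exp (-π * ((k : ℝ) / γ) ^ 2) * (σ / Real.sqrt (1 + σ ^ 2)) := by
    intro k
    rw [← hval k]
    congr 1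
    funext z
    rw [Real.norm_of_nonneg (by positivity)]
  have hsumnorm : Summable fun k : ℤ => ∫ z : ℝ, ‖F k z‖ := by
    simp_rw [hnorm]
    exact (summable_latticeMass hγ).mul_right _
  rw [← MeasureTheory.integral_tsum_of_summable_integral_norm hint hsumnorm,
    tsum_congr hval, tsum_mul_right,
    show (∑' k : ℤ, Real.exp (-π * ((k : ℝ) / γ) ^ 2)) = latticeMass γ from rfl]
  field_simp

/-- KL upper bound: `KL(A_γ^σ ‖ Q) ≤ log(√(1+σ²)/σ) ≤ 1/(2σ²)`.  The KL divergence
is expressed via the density of `A_γ^σ` relative to Lebesgue measure, namely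
`z ↦ exp(-πz²) · T_γ^σ(z)`, so `KL = ∫ exp(-πz²) T(z) log T(z) dz`. -/
theorem smoothedDiscreteGaussian_kl_le (γ σ : ℝ) (hγ : 0 < γ) (hσ : 0 < σ) :
    (∫ z : ℝ, Real.exp (-Real.pi * z ^ 2) * pancakeLR γ σ z * Real.log (pancakeLR γ σ z))
      ≤ Real.log (Real.sqrt (1 + σ ^ 2) / σ) ∧
    Real.log (Real.sqrt (1 + σ ^ 2) / σ) ≤ 1 / (2 * σ ^ 2) := by
  have hs0 : 0 < Real.sqrt (1 + σ ^ 2) := Real.sqrt_pos.2 (by positivity)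
  set C : ℝ := Real.sqrt (1 + σ ^ 2) / σ with hC
  have hσle : σ ≤ Real.sqrt (1 + σ ^ 2) := by
    nlinarith [Real.sq_sqrt (show (0:ℝ) ≤ 1 + σ ^ 2 by positivity),
      Real.sqrt_nonneg (1 + σ ^ 2), sq_nonneg (Real.sqrt (1 + σ ^ 2) - σ)]
  have hC1 : 1 ≤ C := (one_le_div hσ).2 hσle
  have hC0 : 0 < C := lt_of_lt_of_le one_pos hC1
  have hTpos : ∀ z : ℝ, 0 < pancakeLR γ σ z := fun z => pancakeLR_pos hγ hσ z
  have hTle : ∀ z : ℝ, pancakeLR γ σ z ≤ C := fun z => pancakeLR_le hγ hσ z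
  have hmeas := measurable_pancakeLR hγ hσ
  have hexp : Integrable (fun z : ℝ => Real.exp (-π * z ^ 2)) := by
    simpa [neg_mul] using integrable_exp_neg_mul_sq pi_pos
  constructor
  · have hint1 : Integrable (fun z : ℝ => Real.exp (-π * z ^ 2) * pancakeLR γ σ z) := by
      apply Integrable.mono' (hexp.const_mul C)
      · exact ((Real.measurable_exp.comp (by fun_prop)).mul hmeas).aestronglyMeasurable
      · filter_upwards with z
        rw [Real.norm_of_nonneg (mul_nonneg (Real.exp_pos _).le (hTpos z).le)]
        calc Real.exp (-π * z ^ 2) * pancakeLR γ σ z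
            ≤ Real.exp (-π * z ^ 2) * C :=
              mul_le_mul_of_nonneg_left (hTle z) (Real.exp_pos _).le
          _ = C * Real.exp (-π * z ^ 2) := by ring
    have habslog : ∀ z : ℝ, |pancakeLR γ σ z * Real.log (pancakeLR γ σ z)| ≤ 1 + C ^ 2 := by
      intro z
      set t := pancakeLR γ σ z with ht
      have htp := hTpos z
      have hlog : |Real.log t| ≤ 1 / t + t := by
        rw [abs_le]
        constructor
        · have h2 := Real.log_le_sub_one_of_pos (show (0:ℝ) < 1 / t by positivity)
          rw [Real.log_div one_ne_zero htp.ne', Real.log_one] at h2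
          have : 0 < 1 / t := by positivity
          nlinarith
        · have := Real.log_le_sub_one_of_pos htp
          nlinarith [htp, one_div_pos.2 htp]
      calc |t * Real.log t| = t * |Real.log t| := by
            rw [abs_mul, abs_of_pos htp]
        _ ≤ t * (1 / t + t) := mul_le_mul_of_nonneg_left hlog htp.le
        _ = 1 + t ^ 2 := by field_simp [show t ≠ 0 from htp.ne']
        _ ≤ 1 + C ^ 2 := by nlinarith [hTle z, htp]
    have hint2 : Integrable (fun z : ℝ =>
        Real.exp (-π * z ^ 2) * pancakeLR γ σ z * Real.log (pancakeLR γ σ z)) := by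
      apply Integrable.mono' (hexp.const_mul (1 + C ^ 2))
      · exact (((Real.measurable_exp.comp (by fun_prop)).mul hmeas).mul
          (Real.measurable_log.comp hmeas)).aestronglyMeasurable
      · filter_upwards with z
        rw [show Real.exp (-π * z ^ 2) * pancakeLR γ σ z * Real.log (pancakeLR γ σ z)
          = Real.exp (-π * z ^ 2) * (pancakeLR γ σ z * Real.log (pancakeLR γ σ z)) by ring]
        rw [norm_mul, Real.norm_of_nonneg (Real.exp_pos _).le]
        calc Real.exp (-π * z ^ 2) * ‖pancakeLR γ σ z * Real.log (pancakeLR γ σ z)‖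
            ≤ Real.exp (-π * z ^ 2) * (1 + C ^ 2) :=
              mul_le_mul_of_nonneg_left (habslog z) (Real.exp_pos _).le
          _ = (1 + C ^ 2) * Real.exp (-π * z ^ 2) := by ring
    calc (∫ z : ℝ, Real.exp (-π * z ^ 2) * pancakeLR γ σ z * Real.log (pancakeLR γ σ z))
        ≤ ∫ z : ℝ, Real.exp (-π * z ^ 2) * pancakeLR γ σ z * Real.log C := by
          apply integral_mono hint2 (hint1.mul_const _)
          intro z
          exact mul_le_mul_of_nonneg_left
            (Real.log_le_log (hTpos z) (hTle z))
            (mul_nonneg (Real.exp_pos _).le (hTpos z).le)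
      _ = (∫ z : ℝ, Real.exp (-π * z ^ 2) * pancakeLR γ σ z) * Real.log C :=
          integral_mul_const _ _
      _ = Real.log C := by rw [integral_rho_pancake hγ hσ, one_mul]
  · have h1 : C = Real.sqrt (1 + 1 / σ ^ 2) := by
      rw [hC, show (1 + σ ^ 2 : ℝ) = (1 + 1 / σ ^ 2) * σ ^ 2 by field_simp; ring,
        Real.sqrt_mul (by positivity) (σ ^ 2), Real.sqrt_sq hσ.le]
      field_simp
    have h3 : (1:ℝ) / (2 * σ ^ 2) = (1 + 1 / σ ^ 2 - 1) / 2 := by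
      field_simp
      ring
    rw [h1, Real.log_sqrt (by positivity), h3]
    have h2 := Real.log_le_sub_one_of_pos (show (0:ℝ) < 1 + 1 / σ ^ 2 by positivity)
    linarith
end

section
/- Let Q = N(0, 1/(2π)). For any γ > 0, σ > 0, the σ-smoothed discrete Gaussian A_γ^σ has density A_γ^σ(z) = (√(1+σ²)/(σ ρ((1/γ)ℤ))) · ρ(z) · Σ_{k∈ℤ} ρ_σ(z − √(1+σ²) k/γ), where ρ(x) = exp(-π x²) and ρ_σ(x) = exp(-π x²/σ²). -/
open Real MeasureTheory
open scoped NNReal ENNReal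

/-- The discrete Gaussian `A_γ` on `(1/γ)ℤ`, assigning to `k/γ` the mass
`exp(-π(k/γ)²)/ρ((1/γ)ℤ)`. -/
noncomputable def discreteGaussianMeasure (γ : ℝ) : Measure ℝ :=
  Measure.sum fun k : ℤ =>
    (ENNReal.ofReal (Real.exp (-Real.pi * ((k : ℝ) / γ) ^ 2) / latticeMass γ)) •
      Measure.dirac ((k : ℝ) / γ)

/-- The σ-smoothed discrete Gaussian `A_γ^σ`: the law of `(x + σz)/√(1+σ²)` with
`x ∼ A_γ` and `z ∼ N(0, 1/(2π))` independent. -/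
noncomputable def smoothedDiscreteGaussian (γ σ : ℝ) : Measure ℝ :=
  Measure.map (fun p : ℝ × ℝ => (p.1 + σ * p.2) / Real.sqrt (1 + σ ^ 2))
    ((discreteGaussianMeasure γ).prod
      (ProbabilityTheory.gaussianReal 0 ((2 * Real.pi)⁻¹).toNNReal))

lemma smul_prod_aux {α β : Type*} [MeasurableSpace α] [MeasurableSpace β]
    (c : ℝ≥0∞) (μ : Measure α) (ν : Measure β) [SFinite ν] :
    (c • μ).prod ν = c • (μ.prod ν) := by
  ext s hs
  rw [Measure.prod_apply hs, Measure.smul_apply, Measure.prod_apply hs,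
    lintegral_smul_measure, smul_eq_mul]

/-- Density of the σ-smoothed discrete Gaussian:
`A_γ^σ(z) = (√(1+σ²)/(σ ρ((1/γ)ℤ))) · ρ(z) · Σ_{k∈ℤ} ρ_σ(z − √(1+σ²)k/γ)`. -/
theorem smoothedDiscreteGaussian_density (γ σ : ℝ) (hγ : 0 < γ) (hσ : 0 < σ) :
    smoothedDiscreteGaussian γ σ =
      volume.withDensity fun z => ENNReal.ofReal
        ((Real.sqrt (1 + σ ^ 2) / (σ * latticeMass γ)) * Real.exp (-Real.pi * z ^ 2) *
          ∑' k : ℤ, Real.exp (-Real.pi * (z - Real.sqrt (1 + σ ^ 2) * (k : ℝ) / γ) ^ 2 / σ ^ 2)) := by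
  have hs1 : (0:ℝ) < 1 + σ ^ 2 := by positivity
  have hπ := Real.pi_pos
  have ht : 0 < Real.sqrt (1 + σ ^ 2) := Real.sqrt_pos.mpr hs1
  have ht2 : Real.sqrt (1 + σ ^ 2) ^ 2 = 1 + σ ^ 2 := Real.sq_sqrt hs1.le
  have hM : 0 ≤ latticeMass γ := tsum_nonneg fun k => (Real.exp_pos _).le
  set t := Real.sqrt (1 + σ ^ 2) with htdef
  have hfm : Measurable (fun p : ℝ × ℝ => (p.1 + σ * p.2) / t) :=
    (measurable_fst.add (measurable_snd.const_mul σ)).div_const _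
  have hv : ((2 * Real.pi)⁻¹).toNNReal ≠ 0 := by
    simp only [ne_eq, Real.toNNReal_eq_zero, not_le]
    positivity
  have hcv : (⟨(σ / t) ^ 2, sq_nonneg _⟩ * ((2 * Real.pi)⁻¹).toNNReal : ℝ≥0) ≠ 0 := by
    refine mul_ne_zero ?_ hv
    intro h
    have h' := congrArg (fun x : ℝ≥0 => (x : ℝ)) h
    simp only [NNReal.coe_mk, NNReal.coe_zero] at h'
    have : (0:ℝ) < (σ / t) ^ 2 := by positivity
    exact this.ne' h'
  have step1 : smoothedDiscreteGaussian γ σ =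
      Measure.sum fun k : ℤ =>
        ENNReal.ofReal (Real.exp (-Real.pi * ((k : ℝ) / γ) ^ 2) / latticeMass γ) •
          volume.withDensity
            (ProbabilityTheory.gaussianPDF (((k : ℝ) / γ) / t)
              (⟨(σ / t) ^ 2, sq_nonneg _⟩ * ((2 * Real.pi)⁻¹).toNNReal)) := by
    rw [smoothedDiscreteGaussian, discreteGaussianMeasure, Measure.prod_sum_left,
      Measure.map_sum hfm.aemeasurable]
    congr 1
    funext k
    rw [smul_prod_aux, Measure.map_smul, Measure.dirac_prod,
      Measure.map_map hfm measurable_prodMk_left]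
    congr 1
    have hcomp : ((fun p : ℝ × ℝ => (p.1 + σ * p.2) / t) ∘ Prod.mk ((k : ℝ) / γ)) =
        (fun y => y + ((k : ℝ) / γ) / t) ∘ (fun z : ℝ => (σ / t) * z) := by
      funext x
      simp only [Function.comp_apply]
      field_simp
      ring
    rw [hcomp, ← Measure.map_map (measurable_add_const _) (measurable_const_mul _),
      ProbabilityTheory.gaussianReal_map_const_mul,
      ProbabilityTheory.gaussianReal_map_add_const, mul_zero, zero_add]
    exact ProbabilityTheory.gaussianReal_of_var_ne_zero _ hcv
  rw [step1]
  have step2 : (Measure.sum fun k : ℤ =>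
        ENNReal.ofReal (Real.exp (-Real.pi * ((k : ℝ) / γ) ^ 2) / latticeMass γ) •
          volume.withDensity
            (ProbabilityTheory.gaussianPDF (((k : ℝ) / γ) / t)
              (⟨(σ / t) ^ 2, sq_nonneg _⟩ * ((2 * Real.pi)⁻¹).toNNReal))) =
      volume.withDensity (∑' k : ℤ,
        ENNReal.ofReal (Real.exp (-Real.pi * ((k : ℝ) / γ) ^ 2) / latticeMass γ) •
          ProbabilityTheory.gaussianPDF (((k : ℝ) / γ) / t)
            (⟨(σ / t) ^ 2, sq_nonneg _⟩ * ((2 * Real.pi)⁻¹).toNNReal)) := by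
    rw [withDensity_tsum (fun k => by
      exact (ProbabilityTheory.measurable_gaussianPDF _ _).const_smul _)]
    congr 1
    funext k
    rw [withDensity_smul _ (ProbabilityTheory.measurable_gaussianPDF _ _)]
  rw [step2]
  congr 1
  funext z
  rw [tsum_apply (Pi.summable.mpr fun _ => ENNReal.summable)]
  have hσ2 : (0:ℝ) < σ ^ 2 := by positivity
  have hsum : Summable fun k : ℤ => Real.exp (-Real.pi * (z - t * (k:ℝ) / γ) ^ 2 / σ ^ 2) := by
    have hT : 0 < (t / γ) ^ 2 / σ ^ 2 := by positivity
    have h0 := summable_pow_mul_jacobiTheta₂_term_bound (|z * (t / γ)| / σ ^ 2) hT 0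
    simp only [pow_zero, one_mul] at h0
    refine Summable.of_nonneg_of_le (fun k => (Real.exp_pos _).le) (fun k => ?_)
      (h0.mul_left (Real.exp (-Real.pi * z ^ 2 / σ ^ 2)))
    rw [← Real.exp_add]
    apply Real.exp_le_exp.mpr
    push_cast
    have habs : z * (t / γ) * (k:ℝ) ≤ |z * (t / γ)| * |(k:ℝ)| := by
      rw [← abs_mul]; exact le_abs_self _
    have hexpand : -Real.pi * z ^ 2 / σ ^ 2 +
        -Real.pi * ((t / γ) ^ 2 / σ ^ 2 * (k:ℝ) ^ 2 - 2 * (|z * (t / γ)| / σ ^ 2) * |(k:ℝ)|) =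
        (-Real.pi * z ^ 2 +
          -Real.pi * ((t / γ) ^ 2 * (k:ℝ) ^ 2 - 2 * |z * (t / γ)| * |(k:ℝ)|)) / σ ^ 2 := by
      field_simp
    rw [hexpand]
    have hnum : -Real.pi * (z - t * (k:ℝ) / γ) ^ 2 ≤
        -Real.pi * z ^ 2 + -Real.pi * ((t / γ) ^ 2 * (k:ℝ) ^ 2 - 2 * |z * (t / γ)| * |(k:ℝ)|) := by
      have h2 := mul_le_mul_of_nonneg_left habs (by positivity : (0:ℝ) ≤ 2 * Real.pi)
      ring_nf
      ring_nf at h2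
      linarith
    exact div_le_div_of_nonneg_right hnum hσ2.le
  rw [← tsum_mul_left, ENNReal.ofReal_tsum_of_nonneg (fun k => by positivity) (hsum.mul_left _)]
  refine tsum_congr fun k => ?_
  simp only [Pi.smul_apply, smul_eq_mul, ProbabilityTheory.gaussianPDF]
  rw [← ENNReal.ofReal_mul (div_nonneg (Real.exp_pos _).le hM)]
  congr 1
  simp only [ProbabilityTheory.gaussianPDFReal]
  have hvc : ((⟨(σ / t) ^ 2, sq_nonneg _⟩ * ((2 * Real.pi)⁻¹).toNNReal : ℝ≥0) : ℝ) =
      (σ / t) ^ 2 * (2 * Real.pi)⁻¹ := by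
    show (σ / t) ^ 2 * ((((2 * Real.pi)⁻¹).toNNReal : ℝ)) = _
    rw [Real.coe_toNNReal _ (by positivity)]
  rw [hvc]
  have h1 : 2 * Real.pi * ((σ / t) ^ 2 * (2 * Real.pi)⁻¹) = (σ / t) ^ 2 := by
    field_simp
  rw [h1, Real.sqrt_sq (by positivity : (0:ℝ) ≤ σ / t)]
  have hE : -(z - (k:ℝ) / γ / t) ^ 2 / (2 * ((σ / t) ^ 2 * (2 * Real.pi)⁻¹)) =
      -Real.pi * (z * t - (k:ℝ) / γ) ^ 2 / σ ^ 2 := by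
    rw [div_eq_div_iff (by positivity) (by positivity)]
    field_simp
  rw [hE]
  have hexp : Real.exp (-Real.pi * ((k:ℝ) / γ) ^ 2) *
      Real.exp (-Real.pi * (z * t - (k:ℝ) / γ) ^ 2 / σ ^ 2) =
      Real.exp (-Real.pi * z ^ 2) *
        Real.exp (-Real.pi * (z - t * (k:ℝ) / γ) ^ 2 / σ ^ 2) := by
    rw [← Real.exp_add, ← Real.exp_add]
    congr 1
    field_simp
    linear_combination ((k:ℝ) ^ 2 - γ ^ 2 * z ^ 2) * ht2
  calc Real.exp (-Real.pi * ((k:ℝ) / γ) ^ 2) / latticeMass γ *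
        ((σ / t)⁻¹ * Real.exp (-Real.pi * (z * t - (k:ℝ) / γ) ^ 2 / σ ^ 2))
      = (σ / t)⁻¹ / latticeMass γ * (Real.exp (-Real.pi * ((k:ℝ) / γ) ^ 2) *
          Real.exp (-Real.pi * (z * t - (k:ℝ) / γ) ^ 2 / σ ^ 2)) := by ring
    _ = (σ / t)⁻¹ / latticeMass γ * (Real.exp (-Real.pi * z ^ 2) *
          Real.exp (-Real.pi * (z - t * (k:ℝ) / γ) ^ 2 / σ ^ 2)) := by rw [hexp]
    _ = t / (σ * latticeMass γ) * Real.exp (-Real.pi * z ^ 2) *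
          Real.exp (-Real.pi * (z - t * (k:ℝ) / γ) ^ 2 / σ ^ 2) := by
        rw [inv_div]
        ring
end

section
/- For any γ > 1 and σ ≥ 2/γ, the total variation distance between the σ-smoothed discrete Gaussian A_γ^σ and N(0, 1/(2π)) satisfies TV(A_γ^σ, Q) ≤ 8 exp(-π s²), where s = γσ/√(1+σ²). -/
set_option maxHeartbeats 1000000

open Real

lemma summable_gauss_int (r : ℝ) (hr : 0 < r) :
    Summable (fun n : ℤ => Real.exp (-π * r * n ^ 2)) := by
  rw [← Complex.summable_ofReal]
  have h := (summable_jacobiTheta₂_term_iff 0 (r * Complex.I)).mpr (by simp [hr])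
  refine h.congr fun n => ?_
  rw [jacobiTheta₂_term, Complex.ofReal_exp]
  congr 1
  push_cast
  ring_nf
  rw [Complex.I_sq]
  ring

lemma shifted_bound (s u : ℝ) (hs : 0 < s) :
    |(1 / s) * (∑' k : ℤ, Real.exp (-π * (u - k) ^ 2 / s ^ 2)) - 1|
      ≤ (∑' n : ℤ, Real.exp (-π * s ^ 2 * n ^ 2)) - 1 := by
  have hs0 : s ≠ 0 := hs.ne'
  have hsc : (s : ℂ) ≠ 0 := by exact_mod_cast hs0
  set a : ℂ := ((1 / s ^ 2 : ℝ) : ℂ) with ha_def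
  set b : ℂ := ((u / s ^ 2 : ℝ) : ℂ) with hb_def
  have ha : 0 < a.re := by rw [ha_def, Complex.ofReal_re]; positivity
  have ha0 : a ≠ 0 := by
    rw [ha_def]
    simp only [ne_eq, Complex.ofReal_eq_zero]
    positivity
  -- a ^ (1/2) = 1/s
  have hapow : a ^ (1 / 2 : ℂ) = ((1 / s : ℝ) : ℂ) := by
    rw [ha_def, show (1 / 2 : ℂ) = ((1 / 2 : ℝ) : ℂ) by norm_num,
      ← Complex.ofReal_cpow (by positivity)]
    congr 1
    rw [← Real.sqrt_eq_rpow, one_div, Real.sqrt_inv, Real.sqrt_sq hs.le, one_div]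
  have H := Complex.tsum_exp_neg_quadratic ha b
  rw [hapow] at H
  set f : ℤ → ℂ := fun n => Complex.exp (-↑π / a * (↑n + Complex.I * b) ^ 2) with hf_def
  -- norm of f n
  have hnorm : ∀ n : ℤ, ‖f n‖ = Real.exp (π * u ^ 2 / s ^ 2) * Real.exp (-π * s ^ 2 * n ^ 2) := by
    intro n
    have hexp : -↑π / a * (↑n + Complex.I * b) ^ 2
        = ((-π * s ^ 2 * n ^ 2 + π * u ^ 2 / s ^ 2 : ℝ) : ℂ)
          + ((-2 * π * s ^ 2 * n * (u / s ^ 2) : ℝ) : ℂ) * Complex.I := by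
      rw [ha_def, hb_def]
      push_cast
      field_simp
      ring_nf
      rw [Complex.I_sq]
      ring_nf
    rw [hf_def]
    simp only [hexp]
    rw [Complex.norm_exp]
    simp only [Complex.add_re, Complex.ofReal_re, Complex.mul_I_re, Complex.ofReal_im, neg_zero,
      add_zero]
    rw [← Real.exp_add]
    ring_nf
  have hfs : Summable f := by
    rw [← summable_norm_iff]
    simp only [hnorm]
    exact (summable_gauss_int (s ^ 2) (by positivity)).mul_left _
  -- f 0
  have hf0 : f 0 = Complex.exp ((π * u ^ 2 / s ^ 2 : ℝ) : ℂ) := by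
    rw [hf_def]
    simp only [Int.cast_zero, zero_add]
    congr 1
    rw [ha_def, hb_def]
    push_cast
    rw [mul_pow, Complex.I_sq]
    field_simp [hsc]
  -- the real sum as complex
  have hR : (((1 / s) * (∑' k : ℤ, Real.exp (-π * (u - k) ^ 2 / s ^ 2)) - 1 : ℝ) : ℂ)
      = Complex.exp ((-π * u ^ 2 / s ^ 2 : ℝ) : ℂ)
        * ((∑' n : ℤ, f n) - Complex.exp ((π * u ^ 2 / s ^ 2 : ℝ) : ℂ)) := by
    have h1 : ((∑' k : ℤ, Real.exp (-π * (u - k) ^ 2 / s ^ 2) : ℝ) : ℂ)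
        = Complex.exp ((-π * u ^ 2 / s ^ 2 : ℝ) : ℂ)
          * ∑' n : ℤ, Complex.exp (-↑π * a * (n:ℂ) ^ 2 + 2 * ↑π * b * n) := by
      rw [Complex.ofReal_tsum, ← tsum_mul_left]
      refine tsum_congr fun n => ?_
      rw [Complex.ofReal_exp, ← Complex.exp_add]
      congr 1
      rw [ha_def, hb_def]
      push_cast
      field_simp
      ring
    rw [Complex.ofReal_sub, Complex.ofReal_mul, Complex.ofReal_one, h1, H]
    have hinv : (((1 / s : ℝ) : ℂ)) * (1 / ((1 / s : ℝ) : ℂ)) = 1 := by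
      rw [mul_one_div, div_self]
      simp [hs0]
    have he : Complex.exp ((-π * u ^ 2 / s ^ 2 : ℝ) : ℂ)
        * Complex.exp ((π * u ^ 2 / s ^ 2 : ℝ) : ℂ) = 1 := by
      rw [← Complex.exp_add,
        show ((-π * u ^ 2 / s ^ 2 : ℝ) : ℂ) + ((π * u ^ 2 / s ^ 2 : ℝ) : ℂ) = 0 by
          push_cast; ring, Complex.exp_zero]
    have hstep : (((1 / s : ℝ) : ℂ)) * (Complex.exp ((-π * u ^ 2 / s ^ 2 : ℝ) : ℂ)
        * (1 / ((1 / s : ℝ) : ℂ) * ∑' n : ℤ, f n))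
        = Complex.exp ((-π * u ^ 2 / s ^ 2 : ℝ) : ℂ) * ∑' n : ℤ, f n := by
      push_cast
      field_simp
    rw [hstep, mul_sub, he]
  have hMs : Summable (fun n : ℤ => Real.exp (-π * s ^ 2 * n ^ 2)) :=
    summable_gauss_int _ (by positivity)
  have habs : |(1 / s) * (∑' k : ℤ, Real.exp (-π * (u - k) ^ 2 / s ^ 2)) - 1|
      = ‖(((1 / s) * (∑' k : ℤ, Real.exp (-π * (u - k) ^ 2 / s ^ 2)) - 1 : ℝ) : ℂ)‖ := by
    rw [Complex.norm_real, Real.norm_eq_abs]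
  rw [habs, hR, norm_mul]
  have hne : ‖Complex.exp ((-π * u ^ 2 / s ^ 2 : ℝ) : ℂ)‖ = Real.exp (-π * u ^ 2 / s ^ 2) := by
    rw [Complex.norm_exp, Complex.ofReal_re]
  rw [hne]
  have hnval : ∀ n : ℤ, ‖if n = 0 then (0 : ℂ) else f n‖
      = if n = 0 then 0 else Real.exp (π * u ^ 2 / s ^ 2) * Real.exp (-π * s ^ 2 * n ^ 2) := by
    intro n
    split
    · simp
    · rw [hnorm]
  have h2 : ‖(∑' n : ℤ, f n) - Complex.exp ((π * u ^ 2 / s ^ 2 : ℝ) : ℂ)‖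
      ≤ Real.exp (π * u ^ 2 / s ^ 2) * ((∑' n : ℤ, Real.exp (-π * s ^ 2 * n ^ 2)) - 1) := by
    rw [← hf0, hfs.tsum_eq_add_tsum_ite 0, add_sub_cancel_left]
    have hsn : Summable (fun n : ℤ => ‖if n = 0 then (0 : ℂ) else f n‖) := by
      refine Summable.of_nonneg_of_le (fun n => norm_nonneg _) (fun n => ?_)
        (hMs.mul_left (Real.exp (π * u ^ 2 / s ^ 2)))
      rw [hnval]
      split
      · positivity
      · exact le_rfl
    refine (norm_tsum_le_tsum_norm hsn).trans ?_
    have hrw : (∑' n : ℤ, ‖if n = 0 then (0 : ℂ) else f n‖)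
        = Real.exp (π * u ^ 2 / s ^ 2)
          * ∑' n : ℤ, (if n = 0 then 0 else Real.exp (-π * s ^ 2 * n ^ 2)) := by
      rw [← tsum_mul_left]
      refine tsum_congr fun n => ?_
      rw [hnval]
      split <;> simp
    rw [hrw]
    have hsplit := hMs.tsum_eq_add_tsum_ite 0
    have h00 : Real.exp (-π * s ^ 2 * ((0 : ℤ) : ℝ) ^ 2) = 1 := by norm_num
    rw [h00] at hsplit
    gcongr
    rw [hsplit]
    linarith
  calc Real.exp (-π * u ^ 2 / s ^ 2) * ‖(∑' n : ℤ, f n) - Complex.exp ((π * u ^ 2 / s ^ 2 : ℝ) : ℂ)‖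
      ≤ Real.exp (-π * u ^ 2 / s ^ 2)
        * (Real.exp (π * u ^ 2 / s ^ 2) * ((∑' n : ℤ, Real.exp (-π * s ^ 2 * n ^ 2)) - 1)) := by
        gcongr
    _ = (∑' n : ℤ, Real.exp (-π * s ^ 2 * n ^ 2)) - 1 := by
        rw [← mul_assoc, ← Real.exp_add,
          show -π * u ^ 2 / s ^ 2 + π * u ^ 2 / s ^ 2 = 0 by ring, Real.exp_zero, one_mul]

lemma theta_sub_one_bound (r : ℝ) (hr : 0 < r) :
    (∑' n : ℤ, Real.exp (-π * r * n ^ 2)) - 1 ≤ 2 / (1 - Real.exp (-π * r)) * Real.exp (-π * r) := by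
  have him : 0 < (↑r * Complex.I).im := by simp [hr]
  have h := norm_jacobiTheta_sub_one_le him
  have h2 : jacobiTheta (r * Complex.I) = ((∑' n : ℤ, Real.exp (-π * r * n ^ 2) : ℝ) : ℂ) := by
    rw [jacobiTheta, Complex.ofReal_tsum]
    refine tsum_congr fun n => ?_
    rw [Complex.ofReal_exp]
    congr 1
    push_cast
    ring_nf
    rw [Complex.I_sq]
    ring
  rw [h2, show ((∑' n : ℤ, Real.exp (-π * r * n ^ 2) : ℝ) : ℂ) - 1
      = (((∑' n : ℤ, Real.exp (-π * r * n ^ 2)) - 1 : ℝ) : ℂ) by push_cast; ring,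
    Complex.norm_real] at h
  have him' : (↑r * Complex.I).im = r := by simp
  rw [him'] at h
  exact (le_abs_self _).trans h

lemma one_le_theta (r : ℝ) (hr : 0 < r) : 1 ≤ ∑' n : ℤ, Real.exp (-π * r * n ^ 2) := by
  have hs := summable_gauss_int r hr
  have h0 : Real.exp (-π * r * (0:ℤ) ^ 2) = 1 := by norm_num
  calc (1:ℝ) = Real.exp (-π * r * (0:ℤ) ^ 2) := h0.symm
    _ ≤ _ := hs.le_tsum 0 (fun n _ => (Real.exp_pos _).le)


lemma pancake_pointwise (γ σ : ℝ) (hγ : 1 < γ) (hσ : σ ≥ 2 / γ) (z : ℝ) :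
    |pancakeLR γ σ z - 1| ≤ 16 * Real.exp (-π * (γ * σ / Real.sqrt (1 + σ ^ 2)) ^ 2) := by
  have hγ0 : 0 < γ := by linarith
  have hσ0 : 0 < σ := lt_of_lt_of_le (by positivity) hσ
  have hA : 0 < 1 + σ ^ 2 := by positivity
  have hsq : 0 < Real.sqrt (1 + σ ^ 2) := Real.sqrt_pos.mpr hA
  have hsq2 : Real.sqrt (1 + σ ^ 2) ^ 2 = 1 + σ ^ 2 := Real.sq_sqrt hA.le
  set c : ℝ := Real.sqrt (1 + σ ^ 2) / γ with hc_def
  have hc : 0 < c := by positivity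
  have hγσ : 2 ≤ γ * σ := by
    have := (div_le_iff₀ hγ0).mp hσ
    linarith [this]
  -- s'^2 value
  have hc2 : (σ / c) ^ 2 = σ ^ 2 * γ ^ 2 / (1 + σ ^ 2) := by
    rw [hc_def, div_pow, div_pow, ← hsq2]
    field_simp
    rw [Real.sqrt_sq hsq.le]
  have hc2' : (γ * σ / Real.sqrt (1 + σ ^ 2)) ^ 2 = (σ / c) ^ 2 := by
    rw [hc2, div_pow, mul_pow, hsq2]
    ring
  have h4s : 4 ≤ σ ^ 2 * γ ^ 2 := by nlinarith [hγσ, hσ0.le, hγ0.le]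
  have hγ2 : 1 ≤ γ ^ 2 := by nlinarith
  have hσ2s : σ ^ 2 ≤ σ ^ 2 * γ ^ 2 := by
    nlinarith [mul_le_mul_of_nonneg_left hγ2 (sq_nonneg σ)]
  have hs45 : 4 / 5 ≤ (σ / c) ^ 2 := by
    rw [hc2, le_div_iff₀ hA]
    linarith
  have hsle : (σ / c) ^ 2 ≤ γ ^ 2 := by
    rw [hc2, div_le_iff₀ hA]
    nlinarith [hσ0.le, hγ0.le]
  -- latticeMass
  set M : ℝ := ∑' n : ℤ, Real.exp (-π * γ ^ 2 * n ^ 2) with hM_def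
  have hL : latticeMass γ = γ * M := by
    rw [latticeMass, hM_def]
    have h1 : (∑' k : ℤ, Real.exp (-Real.pi * ((k : ℝ) / γ) ^ 2))
        = ∑' k : ℤ, Real.exp (-π * (1 / γ ^ 2) * (k : ℝ) ^ 2) := by
      refine tsum_congr fun k => ?_
      congr 1
      field_simp
    rw [h1, Real.tsum_exp_neg_mul_int_sq (by positivity : (0:ℝ) < 1 / γ ^ 2)]
    congr 1
    · rw [← Real.sqrt_eq_rpow, show (1 / γ ^ 2 : ℝ) = (1 / γ) ^ 2 by ring,
        Real.sqrt_sq (by positivity), one_div, one_div, inv_inv]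
    · refine tsum_congr fun n => ?_
      congr 1
      field_simp
  have hM1 : 1 ≤ M := one_le_theta (γ ^ 2) (by positivity)
  have hM0 : 0 < M := by linarith
  -- inner sum rewrite
  have hsum : (∑' k : ℤ, Real.exp (-Real.pi * (z - Real.sqrt (1 + σ ^ 2) * (k : ℝ) / γ) ^ 2 / σ ^ 2))
      = ∑' k : ℤ, Real.exp (-π * (z / c - (k : ℝ)) ^ 2 / (σ / c) ^ 2) := by
    refine tsum_congr fun k => ?_
    have hck : Real.sqrt (1 + σ ^ 2) * (k : ℝ) / γ = c * k := by rw [hc_def]; ring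
    have harg : -π * (z - c * k) ^ 2 / σ ^ 2 = -π * (z / c - (k : ℝ)) ^ 2 / (σ / c) ^ 2 := by
      field_simp
    rw [hck, harg]
  set R : ℝ := ∑' k : ℤ, Real.exp (-π * (z / c - (k : ℝ)) ^ 2 / (σ / c) ^ 2) with hR_def
  have hP : pancakeLR γ σ z = (1 / M) * ((1 / (σ / c)) * R) := by
    have hcoef : Real.sqrt (1 + σ ^ 2) / (σ * (γ * M)) = (1 / M) * (1 / (σ / c)) := by
      rw [hc_def]
      field_simp
    rw [pancakeLR, hsum, hL, hcoef]
    ring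
  -- shifted bound
  have hX := shifted_bound (σ / c) (z / c) (div_pos hσ0 hc)
  rw [← hR_def] at hX
  set Ms : ℝ := ∑' n : ℤ, Real.exp (-π * (σ / c) ^ 2 * n ^ 2) with hMs_def
  have hMs1 : 1 ≤ Ms := one_le_theta ((σ / c) ^ 2) (pow_pos (div_pos hσ0 hc) 2)
  -- q bounds
  set q : ℝ := Real.exp (-π * (σ / c) ^ 2) with hq_def
  have hq' : Real.exp (-π * γ ^ 2) ≤ q := by
    rw [hq_def]
    apply Real.exp_le_exp.mpr
    nlinarith [pi_pos]
  have hq12 : q ≤ 1 / 2 := by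
    have h1 : q ≤ Real.exp (-1) := by
      rw [hq_def]
      apply Real.exp_le_exp.mpr
      nlinarith [pi_gt_three]
    have h2 : Real.exp (-1) ≤ 1 / 2 := by
      rw [Real.exp_neg, inv_le_comm₀ (Real.exp_pos 1) (by norm_num)]
      calc (1 / 2 : ℝ)⁻¹ = 2 := by norm_num
        _ ≤ Real.exp 1 := by linarith [Real.add_one_le_exp 1]
    linarith
  have hq0 : 0 < q := Real.exp_pos _
  -- theta bounds
  have hMsb : Ms - 1 ≤ 4 * q := by
    have := theta_sub_one_bound ((σ / c) ^ 2) (pow_pos (div_pos hσ0 hc) 2)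
    rw [← hMs_def, ← hq_def] at this
    have h4 : 2 / (1 - q) ≤ 4 := by
      rw [div_le_iff₀ (by linarith)]
      linarith
    calc Ms - 1 ≤ 2 / (1 - q) * q := this
      _ ≤ 4 * q := by
          apply mul_le_mul_of_nonneg_right h4 hq0.le
  have hMb : M - 1 ≤ 4 * q := by
    have := theta_sub_one_bound (γ ^ 2) (by positivity)
    rw [← hM_def] at this
    have h1 : 1 - q ≤ 1 - Real.exp (-π * γ ^ 2) := by linarith
    calc M - 1 ≤ 2 / (1 - Real.exp (-π * γ ^ 2)) * Real.exp (-π * γ ^ 2) := this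
      _ ≤ 2 / (1 - q) * q := by
          apply mul_le_mul _ hq' (Real.exp_pos _).le (div_nonneg (by norm_num) (by linarith))
          apply div_le_div_of_nonneg_left (by norm_num) (by linarith) h1
      _ ≤ 4 * q := by
          apply mul_le_mul_of_nonneg_right _ hq0.le
          rw [div_le_iff₀ (by linarith)]
          linarith
  -- assemble
  have target_eq : 16 * Real.exp (-π * (γ * σ / Real.sqrt (1 + σ ^ 2)) ^ 2) = 16 * q := by
    rw [hq_def, hc2']
  rw [target_eq]
  have hXb : |(1 / (σ / c)) * R - 1| ≤ 4 * q := le_trans hX (by linarith)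
  have h1Mle : |(1 : ℝ) / M| ≤ 1 := by
    rw [abs_of_pos (by positivity), div_le_one hM0]
    exact hM1
  have h1Mdiff : |1 / M - 1| ≤ M - 1 := by
    rw [abs_of_nonpos (by rw [sub_nonpos, div_le_one hM0]; exact hM1)]
    have h2M : 2 - M ≤ 1 / M := by
      rw [le_div_iff₀ hM0]
      nlinarith [sq_nonneg (M - 1)]
    linarith
  have key : |pancakeLR γ σ z - 1| ≤ |(1 / (σ / c)) * R - 1| + (M - 1) := by
    rw [hP]
    have expand : (1 / M) * ((1 / (σ / c)) * R) - 1
        = (1 / M) * ((1 / (σ / c)) * R - 1) + (1 / M - 1) := by ring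
    rw [expand]
    calc |(1 / M) * ((1 / (σ / c)) * R - 1) + (1 / M - 1)|
        ≤ |(1 / M) * ((1 / (σ / c)) * R - 1)| + |1 / M - 1| := abs_add_le _ _
      _ ≤ |(1 / (σ / c)) * R - 1| + (M - 1) := by
          refine add_le_add ?_ h1Mdiff
          rw [abs_mul]
          calc |1 / M| * |(1 / (σ / c)) * R - 1| ≤ 1 * |(1 / (σ / c)) * R - 1| :=
              mul_le_mul_of_nonneg_right h1Mle (abs_nonneg _)
            _ = _ := one_mul _
  linarith

/-- TV upper bound: for `γ > 1` and `σ ≥ 2/γ`, with `s = γσ/√(1+σ²)`,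
`TV(A_γ^σ, Q) = (1/2)∫ exp(-πz²)|T_γ^σ(z) − 1| dz ≤ 8 exp(-πs²)`. -/
theorem smoothedDiscreteGaussian_tv_upper (γ σ : ℝ) (hγ : 1 < γ) (hσ : σ ≥ 2 / γ) :
    (1 / 2) * ∫ z : ℝ, Real.exp (-Real.pi * z ^ 2) * |pancakeLR γ σ z - 1|
      ≤ 8 * Real.exp (-Real.pi * (γ * σ / Real.sqrt (1 + σ ^ 2)) ^ 2) := by
  set E : ℝ := Real.exp (-Real.pi * (γ * σ / Real.sqrt (1 + σ ^ 2)) ^ 2) with hE_def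
  have hE0 : 0 < E := Real.exp_pos _
  have hInt : MeasureTheory.Integrable (fun z : ℝ => Real.exp (-π * z ^ 2) * (16 * E)) := by
    exact (integrable_exp_neg_mul_sq pi_pos).mul_const _
  have h1 : (∫ z : ℝ, Real.exp (-Real.pi * z ^ 2) * |pancakeLR γ σ z - 1|)
      ≤ ∫ z : ℝ, Real.exp (-π * z ^ 2) * (16 * E) := by
    refine MeasureTheory.integral_mono_of_nonneg (Filter.Eventually.of_forall fun z => ?_) hInt
      (Filter.Eventually.of_forall fun z => ?_)
    · positivity
    · have := pancake_pointwise γ σ hγ hσ z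
      rw [← hE_def] at this
      exact mul_le_mul_of_nonneg_left this (Real.exp_pos _).le
  have h2 : (∫ z : ℝ, Real.exp (-π * z ^ 2) * (16 * E)) = 16 * E := by
    rw [MeasureTheory.integral_mul_const, integral_gaussian, div_self pi_ne_zero, Real.sqrt_one,
      one_mul]
  linarith
end

section
/- For γ > 1, the Gaussian mass of the lattice (1/γ)ℤ satisfies |ρ((1/γ)ℤ)/γ − 1| ≤ 2(1 + 1/(πγ)) exp(-πγ²) < 3 exp(-πγ²) < 1/4, where ρ(S) = Σ_{x∈S} exp(-πx²). -/
open Real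

lemma aux_summable {x : ℝ} (hx : 0 < x) :
    Summable fun n : ℕ => Real.exp (-x * ((n : ℝ) + 1) ^ 2) := by
  have hr : Real.exp (-x) < 1 := Real.exp_lt_one_iff.2 (by linarith)
  refine Summable.of_nonneg_of_le (fun n => (Real.exp_pos _).le) (fun n => ?_)
    ((summable_geometric_of_lt_one (Real.exp_pos _).le hr).mul_left (Real.exp (-x)))
  have h1 : Real.exp (-x) * Real.exp (-x) ^ n = Real.exp (-x * ((n : ℝ) + 1)) := by
    rw [← Real.exp_nat_mul, ← Real.exp_add]; ring_nf
  rw [h1]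
  apply Real.exp_le_exp.2
  have hn : (0:ℝ) ≤ (n:ℝ) := Nat.cast_nonneg n
  nlinarith [mul_nonneg hx.le (mul_nonneg (by linarith : (0:ℝ) ≤ (n:ℝ)+1) hn)]

lemma aux_tsum_le {x : ℝ} (hx : 0 < x) :
    ∑' n : ℕ, Real.exp (-x * ((n : ℝ) + 1) ^ 2)
      ≤ Real.exp (-x) / (1 - Real.exp (-x)) := by
  have hr : Real.exp (-x) < 1 := Real.exp_lt_one_iff.2 (by linarith)
  have hgeo := summable_geometric_of_lt_one (Real.exp_pos (-x)).le hr
  have h1 : ∑' n : ℕ, Real.exp (-x) * Real.exp (-x) ^ n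
      = Real.exp (-x) * (1 - Real.exp (-x))⁻¹ := by
    rw [tsum_mul_left, tsum_geometric_of_lt_one (Real.exp_pos _).le hr]
  calc ∑' n : ℕ, Real.exp (-x * ((n : ℝ) + 1) ^ 2)
      ≤ ∑' n : ℕ, Real.exp (-x) * Real.exp (-x) ^ n := by
        refine Summable.tsum_le_tsum (fun n => ?_) (aux_summable hx) (hgeo.mul_left _)
        have h2 : Real.exp (-x) * Real.exp (-x) ^ n = Real.exp (-x * ((n : ℝ) + 1)) := by
          rw [← Real.exp_nat_mul, ← Real.exp_add]; ring_nf
        rw [h2]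
        apply Real.exp_le_exp.2
        have hn : (0:ℝ) ≤ (n:ℝ) := Nat.cast_nonneg n
        nlinarith [mul_nonneg hx.le (mul_nonneg (by linarith : (0:ℝ) ≤ (n:ℝ)+1) hn)]
    _ = Real.exp (-x) * (1 - Real.exp (-x))⁻¹ := h1
    _ = Real.exp (-x) / (1 - Real.exp (-x)) := by rw [div_eq_mul_inv]

/-- For `γ > 1`, `|ρ((1/γ)ℤ)/γ − 1| ≤ 2(1+1/(πγ))e^{-πγ²} < 3e^{-πγ²} < 1/4`. -/
theorem latticeMass_close_to_gamma (γ : ℝ) (hγ : 1 < γ) :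
    |latticeMass γ / γ - 1| ≤ 2 * (1 + 1 / (Real.pi * γ)) * Real.exp (-Real.pi * γ ^ 2) ∧
    2 * (1 + 1 / (Real.pi * γ)) * Real.exp (-Real.pi * γ ^ 2)
      < 3 * Real.exp (-Real.pi * γ ^ 2) ∧
    3 * Real.exp (-Real.pi * γ ^ 2) < 1 / 4 := by
  have hγ0 : 0 < γ := lt_trans one_pos hγ
  have hx : 0 < Real.pi * γ ^ 2 := by positivity
  set x : ℝ := Real.pi * γ ^ 2 with hxdef
  -- Poisson / theta transformation
  have hpoisson := Real.tsum_exp_neg_mul_int_sq (a := γ ^ 2) (by positivity)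
  have hsqrt : (γ ^ 2 : ℝ) ^ (1 / 2 : ℝ) = γ := by
    rw [← Real.rpow_natCast γ 2, ← Real.rpow_mul hγ0.le]
    norm_num
  have hlm : latticeMass γ = γ * ∑' n : ℤ, Real.exp (-x * (n : ℝ) ^ 2) := by
    rw [latticeMass]
    have h1 : ∀ n : ℤ, Real.exp (-Real.pi * ((n : ℝ) / γ) ^ 2)
        = Real.exp (-Real.pi / γ ^ 2 * (n : ℝ) ^ 2) := by
      intro n; congr 1; field_simp
    simp_rw [h1]
    have := hpoisson
    rw [hsqrt] at this
    have h2 : ∀ n : ℤ, -Real.pi * γ ^ 2 * (n : ℝ) ^ 2 = -x * (n : ℝ) ^ 2 := by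
      intro n; rw [hxdef]; ring
    simp_rw [h2] at this
    rw [this]
    field_simp
  set T : ℝ := ∑' n : ℤ, Real.exp (-x * (n : ℝ) ^ 2) with hT
  have hdiv : latticeMass γ / γ = T := by rw [hlm]; field_simp
  -- split the sum over ℤ
  have e1 : ∀ n : ℕ, Real.exp (-x * (((n : ℤ) + 1 : ℤ) : ℝ) ^ 2)
      = Real.exp (-x * ((n : ℝ) + 1) ^ 2) := fun n => by push_cast; ring_nf
  have e2 : ∀ n : ℕ, Real.exp (-x * ((-((n : ℤ) + 1) : ℤ) : ℝ) ^ 2)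
      = Real.exp (-x * ((n : ℝ) + 1) ^ 2) := fun n => by push_cast; ring_nf
  have hpos : Summable fun n : ℕ => Real.exp (-x * (((n : ℤ) + 1 : ℤ) : ℝ) ^ 2) :=
    (aux_summable hx).congr fun n => (e1 n).symm
  have hneg : Summable fun n : ℕ => Real.exp (-x * ((-((n : ℤ) + 1) : ℤ) : ℝ) ^ 2) :=
    (aux_summable hx).congr fun n => (e2 n).symm
  have hsplit : T = (∑' n : ℕ, Real.exp (-x * ((n : ℝ) + 1) ^ 2)) + 1
      + ∑' n : ℕ, Real.exp (-x * ((n : ℝ) + 1) ^ 2) := by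
    have hmain := tsum_of_add_one_of_neg_add_one
      (f := fun n : ℤ => Real.exp (-x * (n : ℝ) ^ 2)) hpos hneg
    rw [hT, hmain, tsum_congr e1, tsum_congr e2]
    norm_num
  set S : ℝ := ∑' n : ℕ, Real.exp (-x * ((n : ℝ) + 1) ^ 2) with hS
  have hS0 : 0 ≤ S := tsum_nonneg fun n => (Real.exp_pos _).le
  have hSle : S ≤ Real.exp (-x) / (1 - Real.exp (-x)) := aux_tsum_le hx
  have hr1 : Real.exp (-x) < 1 := Real.exp_lt_one_iff.2 (by linarith)
  -- key bound: exp(-x)/(1-exp(-x)) ≤ (1 + 1/(π γ)) exp(-x)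
  have hkey : Real.exp (-x) / (1 - Real.exp (-x))
      ≤ (1 + 1 / (Real.pi * γ)) * Real.exp (-x) := by
    have hπγ : 0 < Real.pi * γ := by positivity
    have hexp : Real.pi * γ + 1 ≤ Real.exp x := by
      have h1 : x + 1 ≤ Real.exp x := Real.add_one_le_exp x
      have h2 : Real.pi * γ ≤ x := by
        rw [hxdef]
        nlinarith [Real.pi_pos]
      linarith
    rw [div_le_iff₀ (by linarith)]
    have hex : Real.exp (-x) = (Real.exp x)⁻¹ := by rw [← Real.exp_neg]
    have hexpos : 0 < Real.exp x := Real.exp_pos x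
    rw [hex]
    have hu0 : (0:ℝ) ≤ (Real.exp x)⁻¹ := by positivity
    have hu : (Real.pi * γ + 1) * (Real.exp x)⁻¹ ≤ 1 := by
      calc (Real.pi * γ + 1) * (Real.exp x)⁻¹ ≤ Real.exp x * (Real.exp x)⁻¹ :=
            mul_le_mul_of_nonneg_right hexp hu0
        _ = 1 := mul_inv_cancel₀ (ne_of_gt hexpos)
    have hid : (1 + 1 / (Real.pi * γ)) * (Real.exp x)⁻¹ * (1 - (Real.exp x)⁻¹)
        - (Real.exp x)⁻¹
        = (Real.exp x)⁻¹ * (1 / (Real.pi * γ)) * (1 - (Real.pi * γ + 1) * (Real.exp x)⁻¹) := by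
      field_simp
      ring
    have hpos2 : 0 ≤ (Real.exp x)⁻¹ * (1 / (Real.pi * γ))
        * (1 - (Real.pi * γ + 1) * (Real.exp x)⁻¹) :=
      mul_nonneg (mul_nonneg hu0 (by positivity)) (by linarith)
    linarith [hid, hpos2]
  have habs : |latticeMass γ / γ - 1| = 2 * S := by
    rw [hdiv, hsplit]
    rw [show S + 1 + S - 1 = 2 * S by ring]
    exact abs_of_nonneg (by linarith)
  refine ⟨?_, ?_, ?_⟩
  · rw [habs]
    have : Real.exp (-Real.pi * γ ^ 2) = Real.exp (-x) := by rw [hxdef]; ring_nf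
    rw [this]
    nlinarith [hSle, hkey]
  · have hπγ : 2 < Real.pi * γ := by nlinarith [Real.pi_gt_three]
    have h1 : 1 / (Real.pi * γ) < 1 / 2 := by
      apply one_div_lt_one_div_of_lt <;> linarith
    have hE : 0 < Real.exp (-Real.pi * γ ^ 2) := Real.exp_pos _
    nlinarith
  · have h1 : Real.exp (-Real.pi * γ ^ 2) < Real.exp (-3) := by
      apply Real.exp_lt_exp.2
      nlinarith [Real.pi_gt_three]
    have h2 : Real.exp (-3 : ℝ) < 1 / 12 := by
      rw [Real.exp_neg, inv_lt_comm₀ (Real.exp_pos _) (by norm_num),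
        show ((1:ℝ)/12)⁻¹ = (12:ℝ) by norm_num]
      calc (12 : ℝ) < 2.7182818283 ^ (3 : ℕ) := by norm_num
        _ ≤ Real.exp 1 ^ (3 : ℕ) := by
            gcongr; exact Real.exp_one_gt_d9.le
        _ = Real.exp 3 := by rw [← Real.exp_nat_mul]; norm_num
    nlinarith [Real.exp_pos (-Real.pi * γ ^ 2)]
end
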